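/- For all even j ≥ 2, B_1^j · {0} ⊆ B_2^j; for all j ≥ 2, B_1^j / 0 ⊆ B_2^j; and for all j ≥ 1, B_0^j · {0} ⊆ B_2^j. -/
import Mathlib


/-- The languages `B_0^j` of Construction 4.4 (over the one-letter alphabet). -/
def B0 : ℕ → Language (Fin 1)
  | 0 => 0
  | 1 => {[]}
  | (n + 2) => if (n + 2) % 2 = 0 then B0 (n + 1) * {[0], [0, 0]} else B0 n * {[0, 0, 0]}

/-- The languages `B_1^j` of Construction 4.4 (over the one-letter alphabet). -/
def B1 : ℕ → Language (Fin 1)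
  | 0 => 0
  | 1 => {[], [0]}
  | 2 => {[0, 0]}
  | (n + 3) => if (n + 3) % 2 = 0 then B1 (n + 1) * {[0, 0, 0]} else B1 (n + 2) * {[0], [0, 0]}

/-- The languages `B_2^j` of Construction 4.4 (over the one-letter alphabet). -/
def B2 : ℕ → Language (Fin 1)
  | 0 => 0
  | 1 => {[], [0]}
  | 2 => {[0], [0, 0], [0, 0, 0]}
  | (n + 3) => if (n + 3) % 2 = 0 then B2 (n + 2) * {[0, 0]} else B2 (n + 2) * {[0]}

lemma fin1_list (w : List (Fin 1)) : w = List.replicate w.length 0 := by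
  induction w with
  | nil => rfl
  | cons a t ih =>
    rw [List.length_cons, List.replicate_succ, Subsingleton.elim a 0]
    exact congrArg _ ih

lemma b2_pair (k : ℕ) :
    (∀ n, 3*k+1 ≤ n → n ≤ 3*k+3 → List.replicate n (0 : Fin 1) ∈ B2 (2*k+2)) ∧
    (∀ n, 3*k+2 ≤ n → n ≤ 3*k+4 → List.replicate n (0 : Fin 1) ∈ B2 (2*k+3)) := by
  induction k with
  | zero =>
    constructor
    · intro n h1 h2
      interval_cases n <;> (first | exact Or.inl rfl | exact Or.inr (Or.inl rfl) | exact Or.inr (Or.inr rfl))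
    · intro n h1 h2
      show List.replicate n (0 : Fin 1) ∈ B2 (0+3)
      rw [B2, if_neg (by omega)]
      refine Language.mem_mul.2 ⟨List.replicate (n-1) 0, ?_, [0], rfl, ?_⟩
      · interval_cases n <;> (first | exact Or.inl rfl | exact Or.inr (Or.inl rfl) | exact Or.inr (Or.inr rfl))
      · have : [(0:Fin 1)] = List.replicate 1 0 := rfl
        rw [this, ← List.replicate_add]
        congr 1; omega
  | succ k ih =>
    have heven : ∀ n, 3*(k+1)+1 ≤ n → n ≤ 3*(k+1)+3 →
        List.replicate n (0 : Fin 1) ∈ B2 (2*(k+1)+2) := by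
      intro n h1 h2
      show List.replicate n (0 : Fin 1) ∈ B2 (2*k+1+3)
      rw [B2, if_pos (by omega)]
      refine Language.mem_mul.2 ⟨List.replicate (n-2) 0, ih.2 _ (by omega) (by omega), [0,0], rfl, ?_⟩
      have : [(0:Fin 1), 0] = List.replicate 2 0 := rfl
      rw [this, ← List.replicate_add]
      congr 1; omega
    refine ⟨heven, ?_⟩
    intro n h1 h2
    show List.replicate n (0 : Fin 1) ∈ B2 (2*k+2+3)
    rw [B2, if_neg (by omega)]
    refine Language.mem_mul.2 ⟨List.replicate (n-1) 0, heven _ (by omega) (by omega), [0], rfl, ?_⟩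
    have : [(0:Fin 1)] = List.replicate 1 0 := rfl
    rw [this, ← List.replicate_add]
    congr 1; omega

lemma b1_even (k : ℕ) : ∀ w ∈ B1 (2*k+2), w.length = 3*k+2 := by
  induction k with
  | zero =>
    intro w hw
    have : w = [0, 0] := hw
    simp [this]
  | succ k ih =>
    intro w hw
    have hw' : w ∈ B1 (2*k+1+3) := hw
    rw [B1, if_pos (by omega)] at hw'
    obtain ⟨a, ha, b, hb, hab⟩ := Language.mem_mul.1 hw'
    have hb' : b = [0,0,0] := hb
    have := ih a ha
    rw [← hab, List.length_append, this, hb']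
    simp; omega

lemma b1_odd (k : ℕ) : ∀ w ∈ B1 (2*k+3), w.length = 3*k+3 ∨ w.length = 3*k+4 := by
  intro w hw
  have hw' : w ∈ B1 (2*k+3) := hw
  rw [show 2*k+3 = 2*k+0+3 from rfl, B1, if_neg (by omega)] at hw'
  obtain ⟨a, ha, b, hb, hab⟩ := Language.mem_mul.1 hw'
  have := b1_even k a ha
  rcases hb with hb | hb <;> subst hb <;>
    [left; right] <;> rw [← hab, List.length_append, this] <;> simp

lemma b0_odd (k : ℕ) : ∀ w ∈ B0 (2*k+1), w.length = 3*k := by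
  induction k with
  | zero =>
    intro w hw
    have : w = [] := hw
    simp [this]
  | succ k ih =>
    intro w hw
    have hw' : w ∈ B0 (2*k+1+2) := hw
    rw [B0, if_neg (by omega)] at hw'
    obtain ⟨a, ha, b, hb, hab⟩ := Language.mem_mul.1 hw'
    have hb' : b = [0,0,0] := hb
    have := ih a ha
    rw [← hab, List.length_append, this, hb']
    simp; omega

lemma b0_even (k : ℕ) : ∀ w ∈ B0 (2*k+2), w.length = 3*k+1 ∨ w.length = 3*k+2 := by
  intro w hw
  have hw' : w ∈ B0 (2*k+2) := hw
  rw [show 2*k+2 = 2*k+0+2 from rfl, B0, if_pos (by omega)] at hw'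
  obtain ⟨a, ha, b, hb, hab⟩ := Language.mem_mul.1 hw'
  have := b0_odd k a ha
  rcases hb with hb | hb <;> subst hb <;>
    [left; right] <;> rw [← hab, List.length_append, this] <;> simp

/-- Lemma A.3: for even `j ≥ 2`, `B_1^j · {0} ⊆ B_2^j`; for `j ≥ 2`,
`B_1^j / 0 ⊆ B_2^j`; and for `j ≥ 1`, `B_0^j · {0} ⊆ B_2^j`. -/
theorem stmt17 :
    (∀ j : ℕ, 2 ≤ j → Even j → B1 j * {[0]} ≤ B2 j) ∧
    (∀ j : ℕ, 2 ≤ j → {y : List (Fin 1) | y ++ [0] ∈ B1 j} ⊆ B2 j) ∧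
    (∀ j : ℕ, 1 ≤ j → B0 j * {[0]} ≤ B2 j) := by
  refine ⟨?_, ?_, ?_⟩
  · intro j hj hev x hx
    obtain ⟨k, rfl⟩ : ∃ k, j = 2*k+2 := by
      obtain ⟨m, hm⟩ := hev; exact ⟨m-1, by omega⟩
    obtain ⟨a, ha, b, hb, hab⟩ := Language.mem_mul.1 hx
    have hb' : b = [0] := hb
    have hlen : x.length = 3*k+3 := by
      rw [← hab, List.length_append, b1_even k a ha, hb']; simp
    rw [fin1_list x, hlen]
    exact (b2_pair k).1 _ (by omega) (by omega)
  · intro j hj y hy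
    rcases Nat.even_or_odd j with hev | hodd
    · obtain ⟨k, rfl⟩ : ∃ k, j = 2*k+2 := by
        obtain ⟨m, hm⟩ := hev; exact ⟨m-1, by omega⟩
      have := b1_even k _ hy
      rw [List.length_append] at this
      have hlen : y.length = 3*k+1 := by simpa using this
      rw [fin1_list y, hlen]
      exact (b2_pair k).1 _ (by omega) (by omega)
    · obtain ⟨k, rfl⟩ : ∃ k, j = 2*k+3 := by
        obtain ⟨m, hm⟩ := hodd; exact ⟨m-1, by omega⟩
      have := b1_odd k _ hy
      rw [List.length_append] at this
      have hlen : y.length = 3*k+2 ∨ y.length = 3*k+3 := by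
        simp at this; omega
      rw [fin1_list y]
      exact (b2_pair k).2 _ (by omega) (by omega)
  · intro j hj x hx
    obtain ⟨a, ha, b, hb, hab⟩ := Language.mem_mul.1 hx
    have hb' : b = [0] := hb
    rcases Nat.lt_or_ge j 2 with h2 | h2
    · have hj1 : j = 1 := by omega
      subst hj1
      have ha' : a = [] := ha
      have : x = [0] := by rw [← hab, ha', hb']; rfl
      rw [this]
      exact Or.inr rfl
    rcases Nat.even_or_odd j with hev | hodd
    · obtain ⟨k, rfl⟩ : ∃ k, j = 2*k+2 := by
        obtain ⟨m, hm⟩ := hev; exact ⟨m-1, by omega⟩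
      have := b0_even k a ha
      have hlen : x.length = 3*k+2 ∨ x.length = 3*k+3 := by
        rw [← hab, List.length_append, hb']; simp; omega
      rw [fin1_list x]
      exact (b2_pair k).1 _ (by omega) (by omega)
    · obtain ⟨k, rfl⟩ : ∃ k, j = 2*k+3 := by
        obtain ⟨m, hm⟩ := hodd; exact ⟨m-1, by omega⟩
      have h3 : 2*k+3 = 2*(k+1)+1 := by omega
      have := b0_odd (k+1) a (h3 ▸ ha)
      have hlen : x.length = 3*k+4 := by
        rw [← hab, List.length_append, hb', this]; simp; omega
      rw [fin1_list x, hlen]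
      exact (b2_pair k).2 _ (by omega) (by omega)
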